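/- For every infinite set A and natural number n, there is no boundedly finite-to-one function from B(A) to S_{≤n}(A), and no boundedly finite-to-one function from B(A) to A^n. -/
import Mathlib


/-- `f` is boundedly finite-to-one: some `k` bounds the size of every fiber. -/
def BddFinToOne {α β : Type*} (f : α → β) : Prop :=
  ∃ k : ℕ, ∀ b : β, (f ⁻¹' {b}).Finite ∧ (f ⁻¹' {b}).ncard ≤ k

/-- `P` is a partition of `A` all of whose blocks are finite. -/
def IsFinitePartition (A : Type*) (P : Set (Set A)) : Prop :=
  (∀ p ∈ P, p.Nonempty ∧ p.Finite) ∧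
  (∀ p ∈ P, ∀ q ∈ P, p ≠ q → p ∩ q = ∅) ∧ ⋃₀ P = Set.univ

open Cardinal

universe u

lemma aux_card_le_of_bddFinToOne {α β : Type u} (f : α → β) (h : BddFinToOne f) :
    #α ≤ #β * ℵ₀ := by
  obtain ⟨k, hk⟩ := h
  have h1 : #α = Cardinal.sum (fun b : β => #{x // f x = b}) := by
    rw [← Cardinal.mk_sigma]
    exact (Cardinal.mk_congr (Equiv.sigmaFiberEquiv f)).symm
  rw [h1, ← Cardinal.sum_const' β ℵ₀]
  refine Cardinal.sum_le_sum _ _ (fun b => ?_)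
  have hb : (f ⁻¹' {b}).Finite := (hk b).1
  have : Finite {x // f x = b} := hb.to_subtype
  exact Cardinal.mk_le_aleph0

section Partitions

variable {A : Type u}

open Classical in
/-- A coloring map whose fibers form a partition into blocks of size ≤ 2. -/
noncomputable def cmap (e : (A ⊕ A) ≃ A) (S : Set A) (x : A) : A :=
  Sum.elim (fun a => e (Sum.inl a))
    (fun a => if a ∈ S then e (Sum.inl a) else e (Sum.inr a)) (e.symm x)

lemma cmap_inl (e : (A ⊕ A) ≃ A) (S : Set A) (a : A) :
    cmap e S (e (Sum.inl a)) = e (Sum.inl a) := by simp [cmap]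

lemma cmap_inr_mem (e : (A ⊕ A) ≃ A) {S : Set A} {a : A} (h : a ∈ S) :
    cmap e S (e (Sum.inr a)) = e (Sum.inl a) := by simp [cmap, h]

lemma cmap_inr_not (e : (A ⊕ A) ≃ A) {S : Set A} {a : A} (h : a ∉ S) :
    cmap e S (e (Sum.inr a)) = e (Sum.inr a) := by simp [cmap, h]

noncomputable def Pmap (e : (A ⊕ A) ≃ A) (S : Set A) : Set (Set A) :=
  Set.range (fun x => cmap e S ⁻¹' {cmap e S x})

lemma Pmap_isPartition (e : (A ⊕ A) ≃ A) (S : Set A) :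
    IsFinitePartition A (Pmap e S) := by
  refine ⟨?_, ?_, ?_⟩
  · rintro p ⟨x, rfl⟩
    constructor
    · exact ⟨x, rfl⟩
    · set b : A := Sum.elim id id (e.symm (cmap e S x)) with hb
      refine Set.Finite.subset ((Set.finite_singleton (e (Sum.inr b))).insert
        (e (Sum.inl b))) ?_
      intro y hy
      have hy' : cmap e S y = cmap e S x := hy
      obtain ⟨z, rfl⟩ : ∃ z, y = e z := ⟨e.symm y, (e.apply_symm_apply y).symm⟩
      cases z with
      | inl a =>
        have h1 : cmap e S x = e (Sum.inl a) := by rw [← hy', cmap_inl]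
        have hba : b = a := by rw [hb, h1, Equiv.symm_apply_apply]; rfl
        rw [hba]; exact Set.mem_insert _ _
      | inr a =>
        have hba : b = a := by
          by_cases h : a ∈ S
          · have h1 : cmap e S x = e (Sum.inl a) := by rw [← hy', cmap_inr_mem e h]
            rw [hb, h1, Equiv.symm_apply_apply]; rfl
          · have h1 : cmap e S x = e (Sum.inr a) := by rw [← hy', cmap_inr_not e h]
            rw [hb, h1, Equiv.symm_apply_apply]; rfl
        rw [hba]; exact Set.mem_insert_of_mem _ rfl
  · rintro p ⟨x, rfl⟩ q ⟨y, rfl⟩ hpq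
    have hxy : cmap e S x ≠ cmap e S y :=
      fun h => hpq (congrArg (fun v => cmap e S ⁻¹' {v}) h)
    ext z
    simp only [Set.mem_inter_iff, Set.mem_preimage, Set.mem_singleton_iff,
      Set.mem_empty_iff_false, iff_false, not_and]
    intro h1 h2
    exact hxy (h1 ▸ h2 ▸ rfl)
  · ext x
    simp only [Set.mem_sUnion, Set.mem_univ, iff_true]
    exact ⟨_, ⟨x, rfl⟩, rfl⟩

lemma mem_iff_Pmap (e : (A ⊕ A) ≃ A) (S : Set A) (a : A) :
    a ∈ S ↔ ∃ p ∈ Pmap e S, e (Sum.inl a) ∈ p ∧ e (Sum.inr a) ∈ p := by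
  constructor
  · intro ha
    refine ⟨cmap e S ⁻¹' {cmap e S (e (Sum.inl a))}, ⟨_, rfl⟩, rfl, ?_⟩
    simp only [Set.mem_preimage, Set.mem_singleton_iff]
    rw [cmap_inl, cmap_inr_mem e ha]
  · rintro ⟨p, ⟨x, rfl⟩, h1, h2⟩
    have h1' : cmap e S (e (Sum.inl a)) = cmap e S x := h1
    have h2' : cmap e S (e (Sum.inr a)) = cmap e S x := h2
    by_contra h
    have h3 : e (Sum.inl a) = e (Sum.inr a) := by
      rw [← cmap_inl e S a, ← cmap_inr_not e h, h1', h2']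
    exact Sum.inl_ne_inr (e.injective h3)

lemma Pmap_injective (e : (A ⊕ A) ≃ A) : Function.Injective (Pmap e) := by
  intro S T h
  ext a
  rw [mem_iff_Pmap e S a, mem_iff_Pmap e T a, h]

end Partitions

/-- Main auxiliary lemma: no boundedly finite-to-one map from the type of
finite partitions of `A` to any type of cardinality at most `#A`. -/
lemma aux_no_bddFinToOne {A : Type u} [Infinite A] {β : Type u} (hβ : #β ≤ #A)
    (f : {P : Set (Set A) // IsFinitePartition A P} → β) : ¬ BddFinToOne f := by
  intro hf
  obtain ⟨e⟩ : Nonempty ((A ⊕ A) ≃ A) := by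
    rw [← Cardinal.eq, Cardinal.mk_sum, Cardinal.lift_id,
      Cardinal.add_eq_self (Cardinal.aleph0_le_mk A)]
  have h1 : #{P : Set (Set A) // IsFinitePartition A P} ≤ #β * ℵ₀ :=
    aux_card_le_of_bddFinToOne f hf
  have h2 : (2 : Cardinal) ^ #A ≤ #{P : Set (Set A) // IsFinitePartition A P} := by
    rw [← Cardinal.mk_set]
    exact Cardinal.mk_le_of_injective (f := fun S => (⟨Pmap e S, Pmap_isPartition e S⟩ :
      {P : Set (Set A) // IsFinitePartition A P}))
      (fun S T h => Pmap_injective e (congrArg Subtype.val h))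
  have h3 : #β * ℵ₀ ≤ #A := by
    calc #β * ℵ₀ ≤ #A * ℵ₀ := mul_le_mul_left hβ ℵ₀
      _ = #A := by
        rw [Cardinal.mul_eq_max (Cardinal.aleph0_le_mk A) le_rfl]
        exact max_eq_left (Cardinal.aleph0_le_mk A)
  exact (Cardinal.cantor #A).not_ge ((h2.trans h1).trans h3)

theorem stmt_15 (A : Type*) [Infinite A] (n : ℕ) :
    (∀ f : {P : Set (Set A) // IsFinitePartition A P} →
        {s : Equiv.Perm A | {a | s a ≠ a}.Finite ∧ {a | s a ≠ a}.ncard ≤ n},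
      ¬ BddFinToOne f) ∧
    (∀ f : {P : Set (Set A) // IsFinitePartition A P} → (Fin n → A),
      ¬ BddFinToOne f) := by
  constructor
  · intro f
    refine aux_no_bddFinToOne ?_ f
    -- inject the permutation subtype into `Finset (A × A)`
    have hinj : Function.Injective
        (fun s : {s : Equiv.Perm A | {a | s a ≠ a}.Finite ∧ {a | s a ≠ a}.ncard ≤ n} =>
          (s.2.1.image (fun a => (a, s.1 a))).toFinset) := by
      intro s t h
      rw [Set.Finite.toFinset_inj] at h
      have main : ∀ (u v : Equiv.Perm A), (fun a => (a, u a)) '' {a | u a ≠ a} =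
          (fun a => (a, v a)) '' {a | v a ≠ a} → ∀ a, u a ≠ a → v a = u a := by
        intro u v huv a ha
        have hm : (a, u a) ∈ (fun a => (a, u a)) '' {a | u a ≠ a} := ⟨a, ha, rfl⟩
        rw [huv] at hm
        obtain ⟨b, _, hb2⟩ := hm
        have hb3 : b = a := congrArg Prod.fst hb2
        have hb4 : v b = u a := congrArg Prod.snd hb2
        rw [hb3] at hb4; exact hb4
      have key : ∀ a : A, s.1 a = t.1 a := by
        intro a
        by_cases hs : s.1 a = a
        · by_cases ht : t.1 a = a
          · rw [hs, ht]
          · exact ((ht (by rw [← main t.1 s.1 h.symm a ht, hs])).elim)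
        · exact (main s.1 t.1 h a hs).symm
      exact Subtype.ext (Equiv.ext key)
    calc #{s : Equiv.Perm A | {a | s a ≠ a}.Finite ∧ {a | s a ≠ a}.ncard ≤ n}
        ≤ #(Finset (A × A)) := Cardinal.mk_le_of_injective hinj
      _ = #(A × A) := Cardinal.mk_finset_of_infinite _
      _ = #A := by
          rw [Cardinal.mk_prod, Cardinal.lift_id,
            Cardinal.mul_eq_self (Cardinal.aleph0_le_mk A)]
  · intro f
    refine aux_no_bddFinToOne ?_ f
    simp only [Cardinal.mk_arrow, Cardinal.mk_fin, Cardinal.lift_natCast,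
      Cardinal.lift_uzero, Cardinal.lift_id]
    exact Cardinal.pow_le (Cardinal.aleph0_le_mk A) (Cardinal.nat_lt_aleph0 n)
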